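/- For integers n ≥ 1, m ≥ 0 and 1 ≤ r ≤ n, the minimum of (i+m)/2 + ((n+1)/2 − r)·k̂ over all pairs (k̂, i) of integers with i ≥ 0, |k̂| ≤ (i+m)/(n+1), and (n+1)·k̂ ≡ i+m (mod 2), equals a_r, where a_r = Σ_{j=1}^{r} ⌈(m+2−2j)/(n+1)⌉ if 1 ≤ r ≤ ⌊(n+1)/2⌋ and a_r = Σ_{j=1}^{n+1−r} ⌈(m+2−2j)/(n+1)⌉ if ⌊(n+1)/2⌋ < r ≤ n. -/

import Mathlib

lemma ceil_div_eq_of (a b z : ℤ) (hb : 0 < b) (h1 : b * (z - 1) < a) (h2 : a ≤ b * z) :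
    ⌈((a : ℚ)) / (b : ℚ)⌉ = z := by
  have hb' : (0 : ℚ) < (b : ℚ) := by exact_mod_cast hb
  rw [Int.ceil_eq_iff]
  constructor
  · rw [lt_div_iff₀ hb']
    have : (b : ℚ) * ((z : ℚ) - 1) < (a : ℚ) := by exact_mod_cast h1
    linarith [this]
  · rw [div_le_iff₀ hb']
    have : (a : ℚ) ≤ (b : ℚ) * (z : ℚ) := by exact_mod_cast h2
    linarith [this]

lemma icc_insert (a r : ℤ) (h : a ≤ r + 1) :
    Finset.Icc a (r + 1) = insert (r + 1) (Finset.Icc a r) := by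
  ext x
  simp only [Finset.mem_Icc, Finset.mem_insert]
  omega

lemma sum_ceil (b m r q ρ : ℤ) (hb : 0 < b) (hq : b * q + ρ = m) (hρ0 : 0 ≤ ρ)
    (hρb : ρ < b) (hr : 1 ≤ r) (h2r : 2 * r ≤ b) :
    ∑ j ∈ Finset.Icc (1 : ℤ) r, ⌈((m + 2 - 2 * j : ℤ) : ℚ) / (b : ℚ)⌉
      = q * r + min r ((ρ + 1) / 2) := by
  revert h2r
  refine Int.le_induction (motive := fun r _ => 2 * r ≤ b → ∑ j ∈ Finset.Icc (1:ℤ) r, ⌈((m + 2 - 2 * j : ℤ) : ℚ) / (b : ℚ)⌉ = q * r + min r ((ρ + 1) / 2)) ?_ ?_ r hr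
  · intro h2r
    rw [Finset.Icc_self, Finset.sum_singleton]
    by_cases hρ : 1 ≤ ρ
    · rw [ceil_div_eq_of (m + 2 - 2 * 1) b (q + 1) hb (by linarith) (by linarith)]
      have : min 1 ((ρ + 1) / 2) = 1 := by omega
      rw [this]; ring
    · have hρ' : ρ ≤ 0 := by omega
      rw [ceil_div_eq_of (m + 2 - 2 * 1) b q hb (by linarith) (by linarith)]
      have : min 1 ((ρ + 1) / 2) = 0 := by omega
      rw [this]; ring
  · intro r hr ih h2r
    have h2r' : 2 * r ≤ b := by omega
    rw [icc_insert 1 r (by omega), Finset.sum_insert (by simp)]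
    rw [ih h2r']
    by_cases hδ : 2 * (r + 1) ≤ ρ + 1
    · have hδ' : 2 * (r + 1) ≤ ρ + 1 := hδ
      rw [ceil_div_eq_of (m + 2 - 2 * (r + 1)) b (q + 1) hb (by linarith) (by linarith)]
      have hmin : min (r + 1) ((ρ + 1) / 2) = min r ((ρ + 1) / 2) + 1 := by omega
      rw [hmin]; ring
    · have hδ' : ρ ≤ 2 * r := by omega
      rw [ceil_div_eq_of (m + 2 - 2 * (r + 1)) b q hb (by linarith) (by linarith)]
      have hmin : min (r + 1) ((ρ + 1) / 2) = min r ((ρ + 1) / 2) := by omega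
      rw [hmin]; ring

lemma key_least (b m r q ρ : ℤ) (hb : 0 < b) (hq : b * q + ρ = m) (hρ0 : 0 ≤ ρ)
    (hρb : ρ < b) (hm : 0 ≤ m) (hr : 1 ≤ r) (h2r : 2 * r ≤ b) :
    IsLeast
      {v : ℤ | ∃ i khat : ℤ, 0 ≤ i ∧ b * |khat| ≤ i + m ∧
        (2 : ℤ) ∣ (b * khat - (i + m)) ∧
        2 * v = (i + m) + (b - 2 * r) * khat}
      (q * r + min r ((ρ + 1) / 2)) := by
  have hq0 : 0 ≤ q := by
    rcases le_or_gt 0 q with h | h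
    · exact h
    · exfalso
      have : b * q ≤ b * (-1) := mul_le_mul_of_nonneg_left (by omega) hb.le
      linarith
  constructor
  · -- membership
    by_cases hc : (ρ + 1) / 2 ≤ r
    · rw [min_eq_right hc]
      refine ⟨ρ % 2, -q, by omega, ?_, ?_, ?_⟩
      · rw [abs_neg, abs_of_nonneg hq0]
        have : 0 ≤ ρ % 2 := by omega
        linarith
      · refine ⟨-(b * q) - (ρ + 1) / 2, ?_⟩
        have h2c : 2 * ((ρ + 1) / 2) = ρ + ρ % 2 := by omega
        linear_combination hq + h2c
      · have h2c : 2 * ((ρ + 1) / 2) = ρ + ρ % 2 := by omega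
        linear_combination hq + h2c
    · rw [min_eq_left (by omega)]
      refine ⟨b * (q + 1) - m, -(q + 1), by linarith, ?_, ?_, ?_⟩
      · rw [abs_neg, abs_of_nonneg (by omega : (0:ℤ) ≤ q + 1)]
        linarith
      · exact ⟨-(b * (q + 1)), by ring⟩
      · ring
  · -- lower bound
    rintro v ⟨i, k, hi, habs, hdvd, heq⟩
    set c := (ρ + 1) / 2 with hc
    rcases le_or_gt k (-(q + 1)) with hk | hk
    · have hkneg : k < 0 := by omega
      rw [abs_of_neg hkneg] at habs
      have h2 : 2 * r * (q + 1) ≤ 2 * r * (-k) :=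
        mul_le_mul_of_nonneg_left (by omega) (by omega)
      have hminr : min r c ≤ r := min_le_left _ _
      nlinarith [habs, heq, h2]
    · have h3 : (b - 2 * r) * (-q) ≤ (b - 2 * r) * k :=
        mul_le_mul_of_nonneg_left (by omega) (by omega)
      have hminc : min r c ≤ c := min_le_right _ _
      have habs' : b * |k| ≥ 0 := mul_nonneg hb.le (abs_nonneg k)
      have h2c : 2 * c ≤ ρ + 1 := by omega
      have hstep : 2 * (q * r + c) < 2 * (v + 1) := by nlinarith [habs, heq, h3]
      have := lt_of_mul_lt_mul_left hstep (by norm_num : (0:ℤ) ≤ 2)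
      have : q * r + c ≤ v := by omega
      calc q * r + min r c ≤ q * r + c := by omega
        _ ≤ v := this

lemma set_symm (b m r : ℤ) :
    {v : ℤ | ∃ i khat : ℤ, 0 ≤ i ∧ b * |khat| ≤ i + m ∧
        (2 : ℤ) ∣ (b * khat - (i + m)) ∧
        2 * v = (i + m) + (b - 2 * r) * khat} =
    {v : ℤ | ∃ i khat : ℤ, 0 ≤ i ∧ b * |khat| ≤ i + m ∧
        (2 : ℤ) ∣ (b * khat - (i + m)) ∧
        2 * v = (i + m) + (b - 2 * (b - r)) * khat} := by
  ext v
  constructor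
  · rintro ⟨i, k, hi, habs, ⟨t, ht⟩, heq⟩
    exact ⟨i, -k, hi, by rwa [abs_neg], ⟨-t - (i + m), by linear_combination -ht⟩,
      by linear_combination heq⟩
  · rintro ⟨i, k, hi, habs, ⟨t, ht⟩, heq⟩
    exact ⟨i, -k, hi, by rwa [abs_neg], ⟨-t - (i + m), by linear_combination -ht⟩,
      by linear_combination heq⟩



/-- The minimum of `(i+m)/2 + ((n+1)/2 - r)k̂` over integer pairs `(k̂, i)` with
`i ≥ 0`, `(n+1)|k̂| ≤ i+m` and `(n+1)k̂ ≡ i+m (mod 2)` equals the ceiling sum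
`a_r` from Theorem 3(a). -/
theorem min_pole_order (n m r : ℤ) (hn : 1 ≤ n) (hm : 0 ≤ m)
    (hr₁ : 1 ≤ r) (hr₂ : r ≤ n) :
    IsLeast
      {v : ℤ | ∃ i khat : ℤ, 0 ≤ i ∧ (n + 1) * |khat| ≤ i + m ∧
        (2 : ℤ) ∣ ((n + 1) * khat - (i + m)) ∧
        2 * v = (i + m) + ((n + 1) - 2 * r) * khat}
      (if r ≤ (n + 1) / 2 then
        ∑ j ∈ Finset.Icc (1 : ℤ) r, ⌈((m + 2 - 2 * j : ℤ) : ℚ) / ((n : ℚ) + 1)⌉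
      else
        ∑ j ∈ Finset.Icc (1 : ℤ) (n + 1 - r),
          ⌈((m + 2 - 2 * j : ℤ) : ℚ) / ((n : ℚ) + 1)⌉) := by
  have hb : (0 : ℤ) < n + 1 := by omega
  have hcast : ((n : ℚ) + 1) = (((n + 1 : ℤ)) : ℚ) := by push_cast; ring
  have hq := Int.mul_ediv_add_emod m (n + 1)
  have hρ0 : 0 ≤ m % (n + 1) := Int.emod_nonneg m (by omega)
  have hρb : m % (n + 1) < n + 1 := Int.emod_lt_of_pos m hb
  split_ifs with h
  · have h2r : 2 * r ≤ n + 1 := by omega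
    rw [hcast, sum_ceil (n + 1) m r (m / (n + 1)) (m % (n + 1)) hb hq hρ0 hρb hr₁ h2r]
    exact key_least (n + 1) m r (m / (n + 1)) (m % (n + 1)) hb hq hρ0 hρb hm hr₁ h2r
  · have h2r : 2 * (n + 1 - r) ≤ n + 1 := by omega
    have hr' : 1 ≤ n + 1 - r := by omega
    rw [hcast, sum_ceil (n + 1) m (n + 1 - r) (m / (n + 1)) (m % (n + 1)) hb hq hρ0 hρb
      hr' h2r]
    have hset := set_symm (n + 1) m (n + 1 - r)
    have hrr : (n + 1) - ((n + 1) - r) = r := by ring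
    rw [hrr] at hset
    rw [← hset]
    exact key_least (n + 1) m (n + 1 - r) (m / (n + 1)) (m % (n + 1)) hb hq hρ0 hρb hm
      hr' h2r
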